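/- For every homomorphism of additive groups β : (ℕ → ℤ) → ℤ there exists j ∈ ℕ such that β(m) = 0 for every m ∈ (ℕ → ℤ) satisfying m k = 0 for all k < j. Equivalently, β is continuous when ℕ → ℤ carries the product topology and ℤ carries the discrete topology. -/

import Mathlib

open Finset

theorem specker_aux (β : (ℕ → ℤ) →+ ℤ) :
    ∃ j : ℕ, ∀ m : ℕ → ℤ, (∀ k < j, m k = 0) → β m = 0 := by
  by_contra h
  push_neg at h
  choose m hm0 hmne using h
  set b : ℕ → ℤ := fun n => β (m n) with hb
  set d : ℕ → ℤ := fun n => 2 * |b n| + 2 with hd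
  set D : ℕ → ℤ := fun n => ∏ i ∈ range n, d i with hDdef
  set s : ℕ → ℤ := fun N => ∑ n ∈ range N, D n * b n with hsdef
  have hd2 : ∀ n, 2 ≤ d n := fun n => by
    have := abs_nonneg (b n); simp only [hd]; linarith
  have hDpos : ∀ n, 0 < D n := fun n =>
    Finset.prod_pos (fun i _ => lt_of_lt_of_le two_pos (hd2 i))
  have hDsucc : ∀ n, D (n + 1) = D n * d n := fun n => by
    simp only [hDdef]; rw [Finset.prod_range_succ]
  have hDsplit : ∀ N n, N ≤ n → D n = D N * ∏ i ∈ Ico N n, d i := by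
    intro N n hNn
    simp only [hDdef, Finset.range_eq_Ico]
    rw [Finset.prod_Ico_consecutive _ (Nat.zero_le N) hNn]
  have hD2pow : ∀ n, (2 : ℤ) ^ n ≤ D n := by
    intro n
    induction n with
    | zero => simp [hDdef]
    | succ n ih =>
      rw [hDsucc, pow_succ]
      have := hd2 n
      have := hDpos n
      nlinarith
  -- the diagonal element
  set x : ℕ → ℤ := fun k => ∑ n ∈ range (k + 1), D n * m n k with hxdef
  set y : ℕ → ℕ → ℤ :=
    fun N k => ∑ n ∈ Ico N (k + 1), (∏ i ∈ Ico N n, d i) * m n k with hydef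
  have hsplit : ∀ N, x = (∑ n ∈ range N, D n • m n) + D N • y N := by
    intro N
    funext k
    simp only [Pi.add_apply, Pi.smul_apply, Finset.sum_apply, smul_eq_mul, hxdef, hydef,
      Finset.mul_sum]
    rcases le_or_gt N (k + 1) with hNk | hNk
    · rw [Finset.range_eq_Ico, ← Finset.sum_Ico_consecutive _ (Nat.zero_le N) hNk,
        ← Finset.range_eq_Ico]
      congr 1
      refine Finset.sum_congr rfl (fun n hn => ?_)
      rw [hDsplit N n (Finset.mem_Ico.mp hn).1]
      ring
    · have h1 : Ico N (k + 1) = ∅ := Finset.Ico_eq_empty (by omega)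
      rw [h1]
      simp only [Finset.sum_empty, mul_zero, add_zero]
      rw [Finset.range_eq_Ico, Finset.range_eq_Ico, ← Finset.sum_Ico_consecutive _ (Nat.zero_le (k+1)) (le_of_lt hNk),
        ← Finset.range_eq_Ico]
      have h2 : ∑ n ∈ Ico (k+1) N, D n * m n k = 0 :=
        Finset.sum_eq_zero (fun n hn => by
          rw [hm0 n k (by have := (Finset.mem_Ico.mp hn).1; omega), mul_zero])
      rw [h2, add_zero]
  have htail : ∀ N, β x = s N + D N * β (y N) := by
    intro N
    rw [hsplit N, map_add, map_sum]
    simp only [map_zsmul, smul_eq_mul, hsdef, hb]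
  have h2s : ∀ N, 2 * |s N| < D N := by
    intro N
    induction N with
    | zero => simp [hsdef, hDdef]
    | succ N ih =>
      have h1 : s (N + 1) = s N + D N * b N := by
        simp only [hsdef]; rw [Finset.sum_range_succ]
      have h2 : |s (N + 1)| ≤ |s N| + D N * |b N| := by
        rw [h1]
        calc |s N + D N * b N| ≤ |s N| + |D N * b N| := abs_add_le _ _
          _ = |s N| + D N * |b N| := by
              rw [abs_mul, abs_of_pos (hDpos N)]
      rw [hDsucc]
      have := hDpos N
      simp only [hd]
      nlinarith
  set A : ℤ := β x with hA
  have key : ∀ M, 2 * |A| < D M → A = s M := by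
    intro M hM
    have hdvd : D M ∣ A - s M := ⟨β (y M), by rw [htail M]; ring⟩
    have habs : |A - s M| < D M := by
      have := abs_sub (A) (s M)
      have := h2s M
      calc |A - s M| ≤ |A| + |s M| := abs_sub _ _
        _ < D M := by linarith
    have := Int.eq_zero_of_abs_lt_dvd hdvd habs
    linarith [abs_nonneg (A - s M), this]
  obtain ⟨N, hN⟩ := pow_unbounded_of_one_lt (2 * |A|) (by norm_num : (1:ℤ) < 2)
  have hN1 : 2 * |A| < D N := lt_of_lt_of_le hN (hD2pow N)
  have hN2 : 2 * |A| < D (N + 1) := lt_of_lt_of_le (lt_of_lt_of_le hN (hD2pow N)) (by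
    rw [hDsucc]
    nlinarith [hDpos N, hd2 N])
  have e1 := key N hN1
  have e2 := key (N + 1) hN2
  have h1 : s (N + 1) = s N + D N * b N := by
    simp only [hsdef]; rw [Finset.sum_range_succ]
  have hbN : b N = 0 := by
    have : D N * b N = 0 := by omega
    exact (mul_eq_zero.mp this).resolve_left (ne_of_gt (hDpos N))
  exact hmne N hbN

/-- Every additive group homomorphism `ℤ^ω → ℤ` kills all sequences vanishing in
the first `j` coordinates, for some `j`; equivalently it is continuous for the
product topology on `ℕ → ℤ` (`ℤ` discrete). -/
theorem zomega_to_int_continuous (β : (ℕ → ℤ) →+ ℤ) :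
    (∃ j : ℕ, ∀ m : ℕ → ℤ, (∀ k < j, m k = 0) → β m = 0) ∧ Continuous β := by
  obtain ⟨j, hj⟩ := specker_aux β
  refine ⟨⟨j, hj⟩, ?_⟩
  rw [continuous_iff_continuousAt]
  intro m₀
  have hU : IsOpen {m : ℕ → ℤ | ∀ k < j, m k = m₀ k} := by
    have : {m : ℕ → ℤ | ∀ k < j, m k = m₀ k}
        = ⋂ k ∈ Finset.range j, (fun m : ℕ → ℤ => m k) ⁻¹' {m₀ k} := by
      ext m; simp [Finset.mem_range]
    rw [this]
    exact isOpen_biInter_finset fun k _ =>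
      (continuous_apply k).isOpen_preimage _ (isOpen_discrete _)
  have hmem : m₀ ∈ {m : ℕ → ℤ | ∀ k < j, m k = m₀ k} := fun k _ => rfl
  rw [ContinuousAt, nhds_discrete ℤ, Filter.tendsto_pure]
  filter_upwards [hU.mem_nhds hmem] with m hm
  have h0 : β m - β m₀ = 0 := by
    rw [← β.map_sub]
    exact hj (m - m₀) fun k hk => by simp [hm k hk]
  omega
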